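/- If X and Y are partial isometries from ℓ² to a Hilbert space H with X − Y Hilbert–Schmidt and j(X*X, Y*Y) ≠ 0, then ‖X − Y‖₂ ≥ 1. Consequently, two Parseval frames quadratically close to a fixed frame but lying in different index components have ℓ²-distance at least 1. -/

import Mathlib

open scoped ENNReal ComplexInnerProductSpace

noncomputable section

/-- The sequence space ℓ² over ℂ. -/
abbrev L2C : Type := lp (fun _ : ℕ => ℂ) 2

/-- The standard orthonormal basis vectors of ℓ². -/
def stdVec (i : ℕ) : L2C := lp.single 2 i 1

/-- A bounded operator between Hilbert spaces is a partial isometry if it is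
isometric on the orthogonal complement of its kernel. -/
def IsPartialIsometry {E F : Type*} [NormedAddCommGroup E] [InnerProductSpace ℂ E]
    [NormedAddCommGroup F] [InnerProductSpace ℂ F] (X : E →L[ℂ] F) : Prop :=
  ∀ v ∈ (LinearMap.ker (X : E →ₗ[ℂ] F))ᗮ, ‖X v‖ = ‖v‖

/-- A bounded operator from ℓ² is Hilbert–Schmidt if the squared norms of the images
of the standard basis vectors are summable. -/
def IsHS {H : Type*} [NormedAddCommGroup H] [InnerProductSpace ℂ H]
    (T : L2C →L[ℂ] H) : Prop := Summable fun i => ‖T (stdVec i)‖ ^ 2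

/-- Squared Hilbert–Schmidt norm of a bounded operator from ℓ². -/
def hsNormSq {H : Type*} [NormedAddCommGroup H] [InnerProductSpace ℂ H]
    (T : L2C →L[ℂ] H) : ℝ := ∑' i, ‖T (stdVec i)‖ ^ 2

/-- `U` is the partial isometry in the polar decomposition `F = U|F|` of `F`:
`U` is a partial isometry with the same kernel as `F`, `U* F = |F|` is positive
and `F = U (U* F)`. -/
def IsPolarDecomp {H : Type*} [NormedAddCommGroup H] [InnerProductSpace ℂ H]
    [CompleteSpace H] (F U : L2C →L[ℂ] H) : Prop :=
  IsPartialIsometry U ∧ LinearMap.ker (U : L2C →ₗ[ℂ] H) = LinearMap.ker (F : L2C →ₗ[ℂ] H) ∧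
  (ContinuousLinearMap.adjoint U ∘L F).IsPositive ∧
  F = U ∘L (ContinuousLinearMap.adjoint U ∘L F)

/-- A pair of projections `(P, Q)` is a Fredholm pair if `ker Q ∩ ran P` and
`ran Q ∩ ker P` are both finite dimensional. -/
def FredholmPair {E : Type*} [NormedAddCommGroup E] [InnerProductSpace ℂ E]
    (P Q : E →L[ℂ] E) : Prop :=
  FiniteDimensional ℂ ↥(LinearMap.ker (Q : E →ₗ[ℂ] E) ⊓ LinearMap.range (P : E →ₗ[ℂ] E)) ∧
  FiniteDimensional ℂ ↥(LinearMap.range (Q : E →ₗ[ℂ] E) ⊓ LinearMap.ker (P : E →ₗ[ℂ] E))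

/-- The index of a Fredholm pair of projections:
`j(P,Q) = dim(ker Q ∩ ran P) - dim(ran Q ∩ ker P)`. -/
def pairIndex {E : Type*} [NormedAddCommGroup E] [InnerProductSpace ℂ E]
    (P Q : E →L[ℂ] E) : ℤ :=
  (Module.finrank ℂ ↥(LinearMap.ker (Q : E →ₗ[ℂ] E) ⊓ LinearMap.range (P : E →ₗ[ℂ] E)) : ℤ) -
  (Module.finrank ℂ ↥(LinearMap.range (Q : E →ₗ[ℂ] E) ⊓ LinearMap.ker (P : E →ₗ[ℂ] E)) : ℤ)

open ContinuousLinearMap in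
/-- Pointwise bound on the adjoint through the Hilbert–Schmidt norm. -/
lemma adjoint_apply_norm_sq_le {H : Type*} [NormedAddCommGroup H] [InnerProductSpace ℂ H]
    [CompleteSpace H] (T : L2C →L[ℂ] H) (hhs : IsHS T) (u : H) :
    ‖ContinuousLinearMap.adjoint T u‖ ^ 2 ≤ hsNormSq T * ‖u‖ ^ 2 := by
  set f : L2C := ContinuousLinearMap.adjoint T u with hf
  have h2 : (0:ℝ) < (2 : ℝ≥0∞).toReal := by norm_num
  have hnorm : ‖f‖ ^ (2 : ℝ) = ∑' i, ‖f i‖ ^ (2 : ℝ) := by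
    simpa using lp.norm_rpow_eq_tsum h2 f
  have hfsum : Summable fun i => ‖f i‖ ^ (2 : ℝ) := by
    simpa using (lp.memℓp f).summable h2
  have hval : ∀ i : ℕ, ‖f i‖ ≤ ‖T (stdVec i)‖ * ‖u‖ := by
    intro i
    have h1 : f i = ⟪T (stdVec i), u⟫ := by
      have h2 := lp.inner_single_left (𝕜 := ℂ) i (1 : ℂ) f
      have h3 : ⟪stdVec i, f⟫ = ⟪T (stdVec i), u⟫ :=
        ContinuousLinearMap.adjoint_inner_right T (stdVec i) u
      rw [stdVec] at h3
      rw [h2] at h3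
      simpa [stdVec] using h3
    rw [h1]
    exact norm_inner_le_norm _ _
  have hterm : ∀ i : ℕ, ‖f i‖ ^ (2:ℝ) ≤ ‖T (stdVec i)‖ ^ 2 * ‖u‖ ^ 2 := by
    intro i
    have := hval i
    have h0 : ‖f i‖ ^ (2:ℝ) = ‖f i‖ ^ 2 := by
      rw [show ((2:ℝ)) = ((2:ℕ):ℝ) by norm_num, Real.rpow_natCast]
    rw [h0, ← mul_pow]
    exact pow_le_pow_left₀ (norm_nonneg _) this 2
  have hRHS : Summable fun i => ‖T (stdVec i)‖ ^ 2 * ‖u‖ ^ 2 := hhs.mul_right _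
  have hle : ∑' i, ‖f i‖ ^ (2:ℝ) ≤ ∑' i, ‖T (stdVec i)‖ ^ 2 * ‖u‖ ^ 2 :=
    Summable.tsum_le_tsum hterm hfsum hRHS
  have hfn : ‖f‖ ^ (2:ℝ) = ‖f‖ ^ 2 := by
    rw [show ((2:ℝ)) = ((2:ℕ):ℝ) by norm_num, Real.rpow_natCast]
  calc ‖f‖ ^ 2 = ‖f‖ ^ (2:ℝ) := hfn.symm
    _ = ∑' i, ‖f i‖ ^ (2:ℝ) := hnorm
    _ ≤ ∑' i, ‖T (stdVec i)‖ ^ 2 * ‖u‖ ^ 2 := hle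
    _ = hsNormSq T * ‖u‖ ^ 2 := by rw [hsNormSq, tsum_mul_right]

open ContinuousLinearMap in
/-- If a HS operator attains norm one on some nonzero vector (relatively), then
its squared HS norm is at least one. -/
lemma one_le_hsNormSq_of_exists {H : Type*} [NormedAddCommGroup H] [InnerProductSpace ℂ H]
    [CompleteSpace H] (T : L2C →L[ℂ] H) (hhs : IsHS T) (v : L2C) (hv : v ≠ 0)
    (hTv : ‖T v‖ = ‖v‖) : 1 ≤ hsNormSq T := by
  have hv' : (0:ℝ) < ‖v‖ := norm_pos_iff.mpr hv
  have h1 : ‖T v‖ ^ 2 ≤ ‖v‖ * ‖ContinuousLinearMap.adjoint T (T v)‖ := by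
    have e1 : (‖T v‖ : ℝ) ^ 2 = RCLike.re (⟪T v, T v⟫) := (inner_self_eq_norm_sq (𝕜 := ℂ) _).symm
    have e2 : ⟪T v, T v⟫ = ⟪v, ContinuousLinearMap.adjoint T (T v)⟫ :=
      (ContinuousLinearMap.adjoint_inner_right T v (T v)).symm
    calc ‖T v‖ ^ 2 = RCLike.re (⟪v, ContinuousLinearMap.adjoint T (T v)⟫) := by rw [e1, e2]
      _ ≤ ‖⟪v, ContinuousLinearMap.adjoint T (T v)⟫‖ := RCLike.re_le_norm _
      _ ≤ ‖v‖ * ‖ContinuousLinearMap.adjoint T (T v)‖ := norm_inner_le_norm _ _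
  have h2 : ‖ContinuousLinearMap.adjoint T (T v)‖ ^ 2 ≤ hsNormSq T * ‖T v‖ ^ 2 :=
    adjoint_apply_norm_sq_le T hhs (T v)
  have h3 : (‖T v‖ ^ 2) ^ 2 ≤ ‖v‖ ^ 2 * (hsNormSq T * ‖T v‖ ^ 2) := by
    calc (‖T v‖ ^ 2) ^ 2 ≤ (‖v‖ * ‖ContinuousLinearMap.adjoint T (T v)‖) ^ 2 := by
          apply pow_le_pow_left₀ (by positivity) h1
      _ = ‖v‖ ^ 2 * ‖ContinuousLinearMap.adjoint T (T v)‖ ^ 2 := by ring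
      _ ≤ ‖v‖ ^ 2 * (hsNormSq T * ‖T v‖ ^ 2) := by
          apply mul_le_mul_of_nonneg_left h2 (by positivity)
  rw [hTv] at h3
  nlinarith [pow_pos hv' 2, pow_pos hv' 4]

/-- Partial isometries whose difference is Hilbert–Schmidt and whose initial
projections form a Fredholm pair of nonzero index are at Hilbert–Schmidt distance at
least 1 (stated with the squared Hilbert–Schmidt norm). -/
theorem stmt_19 {H : Type*} [NormedAddCommGroup H] [InnerProductSpace ℂ H]
    [CompleteSpace H] (X Y : L2C →L[ℂ] H)
    (hX : IsPartialIsometry X) (hY : IsPartialIsometry Y) (hhs : IsHS (X - Y))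
    (hind : pairIndex (ContinuousLinearMap.adjoint X ∘L X)
      (ContinuousLinearMap.adjoint Y ∘L Y) ≠ 0) :
    1 ≤ hsNormSq (X - Y) := by
  set P : L2C →L[ℂ] L2C := ContinuousLinearMap.adjoint X ∘L X with hP
  set Q : L2C →L[ℂ] L2C := ContinuousLinearMap.adjoint Y ∘L Y with hQ
  -- one of the two subspaces is nonzero
  have hne : (LinearMap.ker (Q : L2C →ₗ[ℂ] L2C) ⊓ LinearMap.range (P : L2C →ₗ[ℂ] L2C) ≠ ⊥) ∨
      (LinearMap.range (Q : L2C →ₗ[ℂ] L2C) ⊓ LinearMap.ker (P : L2C →ₗ[ℂ] L2C) ≠ ⊥) := by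
    by_contra hcon
    push_neg at hcon
    apply hind
    rw [pairIndex, hcon.1, hcon.2]
    simp
  rcases hne with h | h
  · obtain ⟨v, hvmem, hv0⟩ := Submodule.exists_mem_ne_zero_of_ne_bot h
    obtain ⟨hker, hran⟩ := Submodule.mem_inf.mp hvmem
    -- Y v = 0
    have hYv : Y v = 0 := by
      have h0 : ⟪Y v, Y v⟫ = 0 := by
        have := ContinuousLinearMap.adjoint_inner_right Y v (Y v)
        rw [← this]
        have : ContinuousLinearMap.adjoint Y (Y v) = 0 := hker
        rw [this, inner_zero_right]
      exact inner_self_eq_zero.mp h0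
    -- v ⟂ ker X
    have hperp : v ∈ (LinearMap.ker (X : L2C →ₗ[ℂ] H))ᗮ := by
      rw [Submodule.mem_orthogonal]
      intro w hw
      obtain ⟨u, hu⟩ := hran
      have hXw : X w = 0 := hw
      have : v = ContinuousLinearMap.adjoint X (X u) := by rw [← hu]; rfl
      rw [this, ContinuousLinearMap.adjoint_inner_right, hXw, inner_zero_left]
    have hXv : ‖X v‖ = ‖v‖ := hX v hperp
    have hTv : ‖(X - Y) v‖ = ‖v‖ := by
      rw [ContinuousLinearMap.sub_apply, hYv, sub_zero, hXv]
    exact one_le_hsNormSq_of_exists (X - Y) hhs v hv0 hTv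
  · obtain ⟨v, hvmem, hv0⟩ := Submodule.exists_mem_ne_zero_of_ne_bot h
    obtain ⟨hran, hker⟩ := Submodule.mem_inf.mp hvmem
    have hXv : X v = 0 := by
      have h0 : ⟪X v, X v⟫ = 0 := by
        have := ContinuousLinearMap.adjoint_inner_right X v (X v)
        rw [← this]
        have : ContinuousLinearMap.adjoint X (X v) = 0 := hker
        rw [this, inner_zero_right]
      exact inner_self_eq_zero.mp h0
    have hperp : v ∈ (LinearMap.ker (Y : L2C →ₗ[ℂ] H))ᗮ := by
      rw [Submodule.mem_orthogonal]
      intro w hw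
      obtain ⟨u, hu⟩ := hran
      have hYw : Y w = 0 := hw
      have : v = ContinuousLinearMap.adjoint Y (Y u) := by rw [← hu]; rfl
      rw [this, ContinuousLinearMap.adjoint_inner_right, hYw, inner_zero_left]
    have hYv : ‖Y v‖ = ‖v‖ := hY v hperp
    have hTv : ‖(X - Y) v‖ = ‖v‖ := by
      rw [ContinuousLinearMap.sub_apply, hXv, zero_sub, norm_neg, hYv]
    exact one_le_hsNormSq_of_exists (X - Y) hhs v hv0 hTv

end
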